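/- arXiv:2009.09262 — 2 statements merged into one kernel-verified Lean document; each statement's English description precedes it below -/
import Mathlib

section
/- Let L be a free ℤ-module of finite rank with an integral symmetric bilinear form whose real extension has an orthogonal decomposition L ⊗ ℝ = W ⊕ W⊥ where the form is positive definite on W and negative definite on W⊥. If G ⊆ O(L) is a subgroup such that every element of G preserves the subspace W (hence also W⊥), then G is finite. -/
open scoped TensorProduct

lemma stmt5_cs {V : Type*} [AddCommGroup V] [Module ℝ V] (Q : LinearMap.BilinForm ℝ V)
    (hsym : ∀ x y, Q x y = Q y x) (hnn : ∀ x, 0 ≤ Q x x) (x y : V) :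
    Q x y ^ 2 ≤ Q x x * Q y y := by
  rcases eq_or_ne (Q x x) 0 with h0 | h0
  · have key : ∀ t : ℝ, 0 ≤ 2 * t * Q x y + Q y y := by
      intro t
      have h := hnn (t • x + y)
      simp only [map_add, map_smul, LinearMap.add_apply, LinearMap.smul_apply,
        smul_eq_mul] at h
      rw [hsym y x] at h
      rw [h0] at h; nlinarith [h]
    have hxy : Q x y = 0 := by
      by_contra hne
      have h := key (-(Q y y + 1) / (2 * Q x y))
      have h2 : 2 * (-(Q y y + 1) / (2 * Q x y)) * Q x y = -(Q y y + 1) := by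
        field_simp
      rw [h2] at h
      linarith
    rw [hxy, h0]; simp
  · have hpos : 0 < Q x x := lt_of_le_of_ne (hnn x) (Ne.symm h0)
    have h := hnn (Q x x • y - Q x y • x)
    simp only [map_sub, map_smul, LinearMap.sub_apply, LinearMap.smul_apply,
      smul_eq_mul] at h
    rw [hsym y x] at h
    nlinarith [h, hpos]

lemma stmt5_ext {L : Type*} [AddCommGroup L] [Module ℤ L]
    (B1 B2 : LinearMap.BilinForm ℝ (ℝ ⊗[ℤ] L))
    (h : ∀ x y : L, B1 ((1:ℝ) ⊗ₜ[ℤ] x) ((1:ℝ) ⊗ₜ[ℤ] y) = B2 ((1:ℝ) ⊗ₜ[ℤ] x) ((1:ℝ) ⊗ₜ[ℤ] y))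
    (v w : ℝ ⊗[ℤ] L) : B1 v w = B2 v w := by
  induction v using TensorProduct.induction_on with
  | zero => simp
  | add a b ha hb => simp only [map_add, LinearMap.add_apply, ha, hb]
  | tmul r x =>
    induction w using TensorProduct.induction_on with
    | zero => simp
    | add a b ha hb => simp only [map_add, ha, hb]
    | tmul s y =>
      have h1 : (r : ℝ) ⊗ₜ[ℤ] x = r • ((1:ℝ) ⊗ₜ[ℤ] x) := by
        rw [TensorProduct.smul_tmul', smul_eq_mul, mul_one]
      have h2 : (s : ℝ) ⊗ₜ[ℤ] y = s • ((1:ℝ) ⊗ₜ[ℤ] y) := by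
        rw [TensorProduct.smul_tmul', smul_eq_mul, mul_one]
      rw [h1, h2]
      simp only [map_smul, LinearMap.smul_apply, smul_eq_mul]
      rw [h]

set_option maxHeartbeats 2000000 in
/-- Let `L` be a lattice with a nondegenerate integral symmetric
bilinear form whose real extension decomposes orthogonally as `W ⊕ W⊥` with the
form positive definite on `W` and negative definite on `W⊥`. Any subgroup `G`
of `O(L)` all of whose elements preserve `W` is finite. -/
theorem stmt5 (L : Type*) [AddCommGroup L] [Module.Free ℤ L] [Module.Finite ℤ L]
    (b : LinearMap.BilinForm ℤ L) (hsymm : ∀ x y : L, b x y = b y x)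
    (hnd : b.Nondegenerate)
    (bR : LinearMap.BilinForm ℝ (ℝ ⊗[ℤ] L))
    (hcompat : ∀ x y : L, bR ((1 : ℝ) ⊗ₜ[ℤ] x) ((1 : ℝ) ⊗ₜ[ℤ] y) = (b x y : ℝ))
    (hRsymm : ∀ v w, bR v w = bR w v)
    (W : Submodule ℝ (ℝ ⊗[ℤ] L))
    (hpos : ∀ v ∈ W, v ≠ 0 → 0 < bR v v)
    (hneg : ∀ v ∈ bR.orthogonal W, v ≠ 0 → bR v v < 0)
    (hcompl : IsCompl W (bR.orthogonal W))
    (G : Subgroup (L ≃ₗ[ℤ] L))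
    (hiso : ∀ g ∈ G, ∀ x y : L, b (g x) (g y) = b x y)
    (hW : ∀ g ∈ G, ∀ v ∈ W, LinearMap.baseChange ℝ ((g : L ≃ₗ[ℤ] L) : L →ₗ[ℤ] L) v ∈ W) :
    Finite G := by
  classical
  set Wp := bR.orthogonal W with hWp
  -- the projection onto W along Wp, as an endomorphism
  set p : (ℝ ⊗[ℤ] L) →ₗ[ℝ] (ℝ ⊗[ℤ] L) :=
    W.subtype ∘ₗ W.linearProjOfIsCompl Wp hcompl with hp
  have hpW : ∀ v, p v ∈ W := fun v => (W.linearProjOfIsCompl Wp hcompl v).2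
  have hpl : ∀ v ∈ W, p v = v := by
    intro v hv
    exact congrArg Subtype.val (Submodule.linearProjOfIsCompl_apply_left hcompl ⟨v, hv⟩)
  have hpr : ∀ v ∈ Wp, p v = 0 := by
    intro v hv
    have := Submodule.projectionOnto_apply_of_mem_right hcompl hv
    simp [hp]; exact this
  have hpC : ∀ v, v - p v ∈ Wp := by
    intro v
    have h := Submodule.projection_add_projection_eq_self hcompl v
    have h2 : v - p v = ((bR.orthogonal W).linearProjOfIsCompl W hcompl.symm v : ℝ ⊗[ℤ] L) := by
      exact (eq_sub_of_add_eq' h).symm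
    rw [h2]; exact Subtype.coe_prop _
  -- orthogonality
  have horth : ∀ a ∈ W, ∀ c ∈ Wp, bR a c = 0 := by
    intro a ha c hc
    exact (LinearMap.BilinForm.mem_orthogonal_iff.mp hc) a ha
  -- the positive definite form
  set Q : LinearMap.BilinForm ℝ (ℝ ⊗[ℤ] L) :=
    (bR.compl₁₂ p p) - (bR.compl₁₂ (LinearMap.id - p) (LinearMap.id - p)) with hQ
  have hQapp : ∀ v w, Q v w = bR (p v) (p w) - bR (v - p v) (w - p w) := by
    intro v w
    simp [hQ, LinearMap.compl₁₂_apply, LinearMap.sub_apply]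
  have hQsym : ∀ v w, Q v w = Q w v := by
    intro v w; rw [hQapp, hQapp, hRsymm (p v) (p w), hRsymm (v - p v) (w - p w)]
  have hQnn : ∀ v, 0 ≤ Q v v := by
    intro v
    rw [hQapp]
    have h1 : 0 ≤ bR (p v) (p v) := by
      rcases eq_or_ne (p v) 0 with h | h
      · simp [h]
      · exact le_of_lt (hpos _ (hpW v) h)
    have h2 : bR (v - p v) (v - p v) ≤ 0 := by
      rcases eq_or_ne (v - p v) 0 with h | h
      · simp [h]
      · exact le_of_lt (hneg _ (hpC v) h)
    linarith
  have hQpos : ∀ v, v ≠ 0 → 0 < Q v v := by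
    intro v hv
    rw [hQapp]
    rcases eq_or_ne (p v) 0 with h | h
    · have hv' : v - p v ≠ 0 := by
        intro hc; apply hv; have := sub_eq_zero.mp hc; rw [this, h]
      have := hneg _ (hpC v) hv'
      have h1 : bR (p v) (p v) = 0 := by simp [h]
      linarith
    · have h1 := hpos _ (hpW v) h
      have h2 : bR (v - p v) (v - p v) ≤ 0 := by
        rcases eq_or_ne (v - p v) 0 with hc | hc
        · simp [hc]
        · exact le_of_lt (hneg _ (hpC v) hc)
      linarith
  have hQnd : Q.Nondegenerate := by
    refine ⟨fun m hm => ?_, fun m hm => ?_⟩ <;>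
    · by_contra hm0
      have := hQpos m hm0
      rw [hm m] at this
      exact lt_irrefl 0 this
  -- per-element facts
  have key : ∀ g : L ≃ₗ[ℤ] L, g ∈ G →
      (∀ v w, Q (LinearMap.baseChange ℝ (g : L →ₗ[ℤ] L) v)
        (LinearMap.baseChange ℝ (g : L →ₗ[ℤ] L) w) = Q v w) := by
    intro g hg
    set gR := LinearMap.baseChange ℝ (g : L →ₗ[ℤ] L) with hgR
    -- gR is a bR-isometry
    have hbRg : ∀ v w, bR (gR v) (gR w) = bR v w := by
      intro v w
      exact stmt5_ext (bR.compl₁₂ gR gR) bR (by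
        intro x y
        simp only [LinearMap.compl₁₂_apply, hgR, LinearMap.baseChange_tmul]
        rw [hcompat, hcompat]; exact_mod_cast hiso g hg x y) v w
    -- gR preserves W and Wp
    set g' := g⁻¹ with hg'
    have hg'G : g' ∈ G := inv_mem hg
    set gR' := LinearMap.baseChange ℝ ((g' : L ≃ₗ[ℤ] L) : L →ₗ[ℤ] L) with hgR'
    have hcomp : ∀ v, gR (gR' v) = v := by
      intro v
      have : ((g : L →ₗ[ℤ] L) ∘ₗ ((g' : L ≃ₗ[ℤ] L) : L →ₗ[ℤ] L)) = LinearMap.id := by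
        ext x
        simp [hg', LinearEquiv.coe_coe]
      calc gR (gR' v) = LinearMap.baseChange ℝ ((g : L →ₗ[ℤ] L) ∘ₗ
            ((g' : L ≃ₗ[ℤ] L) : L →ₗ[ℤ] L)) v := by
              rw [LinearMap.baseChange_comp]; rfl
        _ = v := by rw [this, LinearMap.baseChange_id]; rfl
    have hgW : ∀ v ∈ W, gR v ∈ W := hW g hg
    have hgWsurj : ∀ w ∈ W, ∃ v ∈ W, gR v = w := by
      intro w hw
      exact ⟨gR' w, hW g' hg'G w hw, hcomp w⟩
    have hgWp : ∀ v ∈ Wp, gR v ∈ Wp := by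
      intro v hv
      rw [hWp, LinearMap.BilinForm.mem_orthogonal_iff]
      intro n hn
      obtain ⟨m, hm, rfl⟩ := hgWsurj n hn
      show bR (gR m) (gR v) = 0
      rw [hbRg]
      exact horth m hm v hv
    -- gR commutes with p
    have hcommp : ∀ v, p (gR v) = gR (p v) := by
      intro v
      have hdec : gR v = gR (p v) + (gR v - gR (p v)) := by abel
      have hmem2 : gR v - gR (p v) ∈ Wp := by
        have : gR v - gR (p v) = gR (v - p v) := by rw [map_sub]
        rw [this]; exact hgWp _ (hpC v)
      calc p (gR v) = p (gR (p v) + (gR v - gR (p v))) := by rw [← hdec]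
        _ = p (gR (p v)) + p (gR v - gR (p v)) := map_add _ _ _
        _ = gR (p v) + 0 := by rw [hpl _ (hgW _ (hpW v)), hpr _ hmem2]
        _ = gR (p v) := add_zero _
    intro v w
    rw [hQapp, hQapp, hcommp, hcommp, ← map_sub, ← map_sub, hbRg, hbRg]
  -- choose a basis and bound matrix entries
  set ι := Module.Free.ChooseBasisIndex ℤ L with hι
  set bL : Module.Basis ι ℤ L := Module.Free.chooseBasis ℤ L with hbL
  set bV : Module.Basis ι ℝ (ℝ ⊗[ℤ] L) := bL.baseChange ℝ with hbV
  haveI : FiniteDimensional ℝ (ℝ ⊗[ℤ] L) := bV.finiteDimensional_of_finite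
  set d : Module.Basis ι ℝ (ℝ ⊗[ℤ] L) := Q.dualBasis hQnd bV with hd
  have hdQ : ∀ i j, Q (d i) (bV j) = (if j = i then 1 else 0) :=
    fun i j => LinearMap.BilinForm.apply_dualBasis_left (B := Q) hQnd bV i j
  have hcoord : ∀ (v : ℝ ⊗[ℤ] L) (i : ι), Q (d i) v = bV.repr v i := by
    intro v i
    conv_lhs => rw [← bV.sum_repr v]
    rw [map_sum, Finset.sum_eq_single i]
    · rw [map_smul, smul_eq_mul, hdQ i i, if_pos rfl, mul_one]
    · intro j _ hj
      rw [map_smul, smul_eq_mul, hdQ i j, if_neg hj, mul_zero]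
    · intro h; exact absurd (Finset.mem_univ i) h
  set M : ℝ := (∑ i, Q (d i) (d i)) * (∑ j, Q (bV j) (bV j)) with hM
  have hMbound : ∀ i j, Q (d i) (d i) * Q (bV j) (bV j) ≤ M := by
    intro i j
    apply mul_le_mul
    · exact Finset.single_le_sum (fun k _ => hQnn (d k)) (Finset.mem_univ i)
    · exact Finset.single_le_sum (fun k _ => hQnn (bV k)) (Finset.mem_univ j)
    · exact hQnn _
    · exact Finset.sum_nonneg (fun k _ => hQnn (d k))
  set N : ℤ := max 1 ⌈M⌉ with hN
  have hN1 : (1:ℤ) ≤ N := le_max_left _ _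
  have hMN : M ≤ (N:ℝ)^2 := by
    have h1 : M ≤ (⌈M⌉ : ℝ) := Int.le_ceil M
    have h2 : ((⌈M⌉ : ℤ):ℝ) ≤ (N:ℝ) := by exact_mod_cast le_max_right 1 ⌈M⌉
    have h3 : (1:ℝ) ≤ (N:ℝ) := by exact_mod_cast hN1
    nlinarith
  have hentry : ∀ g : L ≃ₗ[ℤ] L, g ∈ G → ∀ i j : ι,
      bL.repr (g (bL j)) i ∈ Set.Icc (-N) N := by
    intro g hg i j
    set e : ℤ := bL.repr (g (bL j)) i with he
    have h1 : Q (d i) (LinearMap.baseChange ℝ (g : L →ₗ[ℤ] L) (bV j)) = (e : ℝ) := by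
      rw [hbV, Module.Basis.baseChange_apply, LinearMap.baseChange_tmul, hcoord, hbV,
        Module.Basis.baseChange_repr_tmul]
      simp [he]
    have h2 := stmt5_cs Q hQsym hQnn (d i) (LinearMap.baseChange ℝ (g : L →ₗ[ℤ] L) (bV j))
    rw [h1, key g hg (bV j) (bV j)] at h2
    have h4 : (e:ℝ)^2 ≤ (N:ℝ)^2 := le_trans (le_trans h2 (hMbound i j)) hMN
    have h5 : e^2 ≤ N^2 := by exact_mod_cast h4
    have h6 := abs_le_of_sq_le_sq' h5 (le_trans zero_le_one hN1)
    exact ⟨h6.1, h6.2⟩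
  haveI : Finite (Set.Icc (-N) N) := (Set.finite_Icc _ _).to_subtype
  let Φ : G → (ι → ι → Set.Icc (-N) N) := fun g i j =>
    ⟨bL.repr ((g : L ≃ₗ[ℤ] L) (bL j)) i, hentry g g.2 i j⟩
  have hΦ : Function.Injective Φ := by
    intro g h hgh
    have hrepr : ∀ i j, bL.repr ((g : L ≃ₗ[ℤ] L) (bL j)) i
        = bL.repr ((h : L ≃ₗ[ℤ] L) (bL j)) i := by
      intro i j
      exact Subtype.ext_iff.mp (congrFun (congrFun hgh i) j)
    apply Subtype.ext
    apply LinearEquiv.toLinearMap_injective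
    apply Module.Basis.ext bL
    intro j
    exact Module.Basis.ext_elem bL (fun i => hrepr i j)
  exact Finite.of_injective Φ hΦ
end

section
/- Let X be a smooth complex projective variety whose rational even cohomology ring H^{even}(X, ℚ) is generated as a ℚ-algebra by H²(X, ℚ), and suppose x₁, …, x_p ∈ H²(X, ℚ) are classes spanning H²(X,ℚ) that are first Chern classes of line bundles L₁, …, L_p. Then the Chern characters ch(L₁^{k₁} ⊗ ⋯ ⊗ L_p^{k_p}) = exp(k₁x₁ + ⋯ + k_p x_p), for (k₁,…,k_p) ∈ ℤ^p, span H^{even}(X, ℚ) as a ℚ-vector space. -/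
open Finset

/-- Vandermonde extraction: if all "polynomial sample" combinations of `w` lie in a
submodule `V`, then each `w j` lies in `V`. -/
lemma vand_mem {A : Type*} [AddCommGroup A] [Module ℚ A] {N : ℕ}
    (w : Fin N → A) (V : Submodule ℚ A)
    (h : ∀ t : Fin N, (∑ j, ((t : ℚ)) ^ j.val • w j) ∈ V) : ∀ j, w j ∈ V := by
  classical
  set M : Matrix (Fin N) (Fin N) ℚ := Matrix.vandermonde (fun i => (i : ℚ)) with hM
  have hdet : M.det ≠ 0 := by
    rw [hM, Matrix.det_vandermonde_ne_zero_iff]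
    intro a b hab
    simp only at hab
    have : (a : ℕ) = (b : ℕ) := by exact_mod_cast hab
    exact Fin.ext this
  have hinv : M⁻¹ * M = 1 := Matrix.nonsing_inv_mul M (isUnit_iff_ne_zero.mpr hdet)
  intro j
  have key : w j = ∑ t, (M⁻¹ j t) • (∑ m, ((t : ℚ)) ^ m.val • w m) := by
    have hMe : ∀ t m : Fin N, ((t : ℚ)) ^ m.val = M t m := by
      intro t m; rw [hM, Matrix.vandermonde_apply]
    calc w j = ∑ m, ((1 : Matrix (Fin N) (Fin N) ℚ) j m) • w m := by
          simp [Matrix.one_apply]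
      _ = ∑ m, ((M⁻¹ * M) j m) • w m := by rw [hinv]
      _ = ∑ m, (∑ t, M⁻¹ j t * M t m) • w m := by simp [Matrix.mul_apply]
      _ = ∑ m, ∑ t, (M⁻¹ j t * M t m) • w m := by simp [Finset.sum_smul]
      _ = ∑ t, ∑ m, (M⁻¹ j t * M t m) • w m := Finset.sum_comm
      _ = ∑ t, (M⁻¹ j t) • (∑ m, ((t : ℚ)) ^ m.val • w m) := by
          refine Finset.sum_congr rfl fun t _ => ?_
          rw [Finset.smul_sum]
          refine Finset.sum_congr rfl fun m _ => ?_
          rw [hMe, smul_smul]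
  rw [key]
  exact Submodule.sum_mem _ fun t _ => Submodule.smul_mem _ _ (h t)

/-- Polarization: if all rational combinations of `u, v` have vanishing `d`-th power,
then `u ^ m * v ^ n = 0` whenever `d ≤ m + n`. -/
lemma pol_zero {A : Type*} [CommRing A] [Algebra ℚ A] {d : ℕ} {u v : A}
    (h : ∀ s t : ℚ, (s • u + t • v) ^ d = 0) :
    ∀ m n : ℕ, d ≤ m + n → u ^ m * v ^ n = 0 := by
  classical
  -- first the case m + n = d, via Vandermonde on the binomial expansion
  have base : ∀ j : ℕ, j ≤ d → v ^ j * u ^ (d - j) = 0 := by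
    intro j hj
    set w : Fin (d + 1) → A := fun j => ((d.choose j.val : ℚ)) • (v ^ j.val * u ^ (d - j.val))
      with hw
    have hsample : ∀ t : Fin (d + 1), (∑ j, ((t : ℚ)) ^ j.val • w j) ∈ (⊥ : Submodule ℚ A) := by
      intro t
      have hexp : ((t : ℚ) • v + u) ^ d = 0 := by
        have h1 := h 1 (t : ℚ)
        rw [one_smul] at h1
        rw [add_comm]
        exact h1
      rw [Submodule.mem_bot]
      calc (∑ j, ((t : ℚ)) ^ j.val • w j)
          = ∑ j ∈ range (d + 1), ((t : ℚ)) ^ j • (((d.choose j : ℚ)) • (v ^ j * u ^ (d - j))) := by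
            rw [← Fin.sum_univ_eq_sum_range
              (fun j => ((t : ℚ)) ^ j • (((d.choose j : ℚ)) • (v ^ j * u ^ (d - j)))) (d + 1)]
        _ = ((t : ℚ) • v + u) ^ d := by
            rw [add_pow]
            refine (Finset.sum_congr rfl fun j hj => ?_).symm
            rw [smul_pow, smul_mul_assoc, smul_mul_assoc]
            congr 1
            rw [mul_comm, ← nsmul_eq_mul, ← Nat.cast_smul_eq_nsmul ℚ]
        _ = 0 := hexp
    have hz := vand_mem w ⊥ hsample ⟨j, Nat.lt_succ_of_le hj⟩
    rw [Submodule.mem_bot, hw] at hz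
    simp only at hz
    have hch : ((d.choose j : ℚ)) ≠ 0 := by
      exact_mod_cast (Nat.choose_pos hj).ne'
    exact (smul_eq_zero.mp hz).resolve_left hch
  intro m n hmn
  set n' := min n d with hn'
  have hn'd : n' ≤ d := min_le_right _ _
  have hn'n : n' ≤ n := min_le_left _ _
  have hm' : d - n' ≤ m := by omega
  have h0 : v ^ n' * u ^ (d - n') = 0 := base n' hn'd
  calc u ^ m * v ^ n
      = u ^ (d - n' + (m - (d - n'))) * v ^ (n' + (n - n')) := by
        rw [Nat.add_sub_cancel' hm', Nat.add_sub_cancel' hn'n]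
    _ = (v ^ n' * u ^ (d - n')) * (u ^ (m - (d - n')) * v ^ (n - n')) := by
        rw [pow_add, pow_add]; ring
    _ = 0 := by rw [h0, zero_mul]

/-- Multiplicativity of the truncated exponential for elements whose high mixed powers vanish. -/
lemma texp_mul {A : Type*} [CommRing A] [Algebra ℚ A] {d : ℕ} {u v : A}
    (h0 : ∀ m n : ℕ, d ≤ m + n → u ^ m * v ^ n = 0) :
    (∑ m ∈ range d, ((m.factorial : ℚ)⁻¹) • u ^ m) *
      (∑ n ∈ range d, ((n.factorial : ℚ)⁻¹) • v ^ n)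
      = ∑ m ∈ range d, ((m.factorial : ℚ)⁻¹) • (u + v) ^ m := by
  classical
  set f : ℕ → ℕ → A := fun m n =>
    ((m.factorial : ℚ)⁻¹ * (n.factorial : ℚ)⁻¹) • (u ^ m * v ^ n) with hf
  have lhs_eq : (∑ m ∈ range d, ((m.factorial : ℚ)⁻¹) • u ^ m) *
      (∑ n ∈ range d, ((n.factorial : ℚ)⁻¹) • v ^ n)
      = ∑ q ∈ range d ×ˢ range d, f q.1 q.2 := by
    rw [Finset.sum_mul_sum, Finset.sum_product]
    refine Finset.sum_congr rfl fun m _ => Finset.sum_congr rfl fun n _ => ?_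
    rw [hf, smul_mul_smul_comm]
  have rhs_eq : (∑ m ∈ range d, ((m.factorial : ℚ)⁻¹) • (u + v) ^ m)
      = ∑ s ∈ (range d).sigma (fun m => range (m + 1)), f s.2 (s.1 - s.2) := by
    rw [Finset.sum_sigma]
    refine Finset.sum_congr rfl fun m hm => ?_
    rw [add_pow, Finset.smul_sum]
    refine Finset.sum_congr rfl fun j hj => ?_
    rw [Finset.mem_range, Nat.lt_succ_iff] at hj
    have hfac : ((m.factorial : ℚ)⁻¹) * (m.choose j : ℚ) =
        (j.factorial : ℚ)⁻¹ * ((m - j).factorial : ℚ)⁻¹ := by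
      have key : (m.choose j : ℚ) * j.factorial * (m - j).factorial = m.factorial := by
        exact_mod_cast Nat.choose_mul_factorial_mul_factorial hj
      field_simp
      nlinarith [key]
    rw [hf]
    simp only
    have : u ^ j * v ^ (m - j) * (m.choose j : A) =
        ((m.choose j : ℚ)) • (u ^ j * v ^ (m - j)) := by
      rw [mul_comm, ← nsmul_eq_mul, ← Nat.cast_smul_eq_nsmul ℚ]
    rw [this, smul_smul, hfac]
  rw [lhs_eq, rhs_eq]
  rw [← Finset.sum_filter_add_sum_filter_not (range d ×ˢ range d) (fun q => q.1 + q.2 < d)]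
  have hzero : ∑ q ∈ (range d ×ˢ range d).filter (fun q => ¬ q.1 + q.2 < d), f q.1 q.2 = 0 := by
    refine Finset.sum_eq_zero fun q hq => ?_
    rw [Finset.mem_filter] at hq
    rw [hf]
    simp only
    rw [h0 q.1 q.2 (by omega), smul_zero]
  rw [hzero, add_zero]
  refine Finset.sum_bij' (fun q _ => (⟨q.1 + q.2, q.1⟩ : Σ _ : ℕ, ℕ))
    (fun s _ => (s.2, s.1 - s.2)) ?_ ?_ ?_ ?_ ?_
  · intro q hq
    simp only [Finset.mem_filter, Finset.mem_product, Finset.mem_range] at hq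
    simp only [Finset.mem_sigma, Finset.mem_range]
    omega
  · intro s hs
    simp only [Finset.mem_sigma, Finset.mem_range] at hs
    simp only [Finset.mem_filter, Finset.mem_product, Finset.mem_range]
    omega
  · intro q hq; simp
  · intro s hs
    simp only [Finset.mem_sigma, Finset.mem_range] at hs
    ext <;> simp <;> omega
  · intro q hq; simp

/-- abstract version: Let `A` be a finite-dimensional commutative
`ℚ`-algebra generated by nilpotent elements `x₁,…,x_p` (all `ℚ`-linear
combinations of which have vanishing `d`-th power). Then the truncated
exponentials `E(k) = ∑_{m<d} (1/m!)(∑ kᵢxᵢ)^m`, for `k ∈ ℤ^p`, span `A` as a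
`ℚ`-vector space. -/
theorem stmt7 (A : Type*) [CommRing A] [Algebra ℚ A] [FiniteDimensional ℚ A]
    (p d : ℕ) (x : Fin p → A)
    (hgen : Algebra.adjoin ℚ (Set.range x) = ⊤)
    (hnil : ∀ c : Fin p → ℚ, (∑ i, c i • x i) ^ d = 0) :
    Submodule.span ℚ
      {a : A | ∃ k : Fin p → ℤ,
        a = ∑ m ∈ Finset.range d, ((m.factorial : ℚ)⁻¹) • (∑ i, (k i : ℚ) • x i) ^ m} = ⊤ := by
  classical
  set S : Set A := {a : A | ∃ k : Fin p → ℤ,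
    a = ∑ m ∈ Finset.range d, ((m.factorial : ℚ)⁻¹) • (∑ i, (k i : ℚ) • x i) ^ m} with hS
  set V : Submodule ℚ A := Submodule.span ℚ S with hV
  -- degenerate case d = 0 : the algebra is trivial
  rcases Nat.eq_zero_or_pos d with hd0 | hdpos
  · subst hd0
    have h10 : (1 : A) = 0 := by
      have := hnil 0
      simpa using this
    rw [eq_top_iff]
    intro a _
    have ha : a = 0 := by
      calc a = a * 1 := (mul_one a).symm
        _ = a * 0 := by rw [h10]
        _ = 0 := mul_zero a
    rw [ha]; exact V.zero_mem
  -- notation for the linear combination and the truncated exponential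
  set u : (Fin p → ℤ) → A := fun k => ∑ i, (k i : ℚ) • x i with hu
  set E : (Fin p → ℤ) → A := fun k =>
    ∑ m ∈ Finset.range d, ((m.factorial : ℚ)⁻¹) • (u k) ^ m with hE
  have hES : ∀ k, E k ∈ S := fun k => ⟨k, rfl⟩
  have hEV : ∀ k, E k ∈ V := fun k => Submodule.subset_span (hES k)
  -- high mixed powers vanish
  have hmix : ∀ k l : Fin p → ℤ, ∀ m n : ℕ, d ≤ m + n → (u k) ^ m * (u l) ^ n = 0 := by
    intro k l
    refine pol_zero fun s t => ?_
    have : s • u k + t • u l = ∑ i, (s * (k i : ℚ) + t * (l i : ℚ)) • x i := by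
      rw [hu]
      simp only [Finset.smul_sum, smul_smul, ← Finset.sum_add_distrib, add_smul]
    rw [this]
    exact hnil _
  -- the exponentials multiply
  have hEmul : ∀ k l : Fin p → ℤ, E k * E l = E (k + l) := by
    intro k l
    have hadd : u k + u l = u (k + l) := by
      rw [hu]
      simp only [← Finset.sum_add_distrib, ← add_smul, Pi.add_apply, Int.cast_add]
    rw [hE]
    simp only
    rw [texp_mul (hmix k l), hadd]
  -- S is closed under multiplication, hence V is as well
  have hmulV : ∀ a ∈ V, ∀ b ∈ V, a * b ∈ V := by
    intro a ha b hb
    have hVV : V * V ≤ V := by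
      rw [hV, Submodule.span_mul_span]
      refine Submodule.span_mono ?_
      rintro _ ⟨a', ⟨k, rfl⟩, b', ⟨l, rfl⟩, rfl⟩
      exact ⟨k + l, hEmul k l⟩
    exact hVV (Submodule.mul_mem_mul ha hb)
  -- 1 ∈ V
  have h1V : (1 : A) ∈ V := by
    have h0 : u 0 = 0 := by rw [hu]; simp
    have : E 0 = 1 := by
      rw [hE]
      simp only [h0]
      have hss := Finset.sum_eq_single_of_mem (s := Finset.range d)
        (f := fun m => ((m.factorial : ℚ)⁻¹) • (0 : A) ^ m) 0 (Finset.mem_range.mpr hdpos)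
        (fun m _ hm0 => by simp [zero_pow hm0])
      rw [hss]
      simp
    rw [← this]; exact hEV 0
  -- V is a subalgebra
  let B : Subalgebra ℚ A :=
    { carrier := V
      mul_mem' := fun ha hb => hmulV _ ha _ hb
      one_mem' := h1V
      add_mem' := fun ha hb => V.add_mem ha hb
      zero_mem' := V.zero_mem
      algebraMap_mem' := fun r => by
        rw [Algebra.algebraMap_eq_smul_one]
        exact V.smul_mem r h1V }
  -- each x i belongs to V
  have hxV : ∀ i, x i ∈ V := by
    intro i
    rcases Nat.lt_or_ge 1 d with hd1 | hd1
    · -- d ≥ 2 : Vandermonde on single-variable exponentials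
      set w : Fin d → A := fun m => ((m.val.factorial : ℚ)⁻¹) • (x i) ^ m.val with hw
      have hsample : ∀ t : Fin d, (∑ j, ((t : ℚ)) ^ j.val • w j) ∈ V := by
        intro t
        set k : Fin p → ℤ := fun i' => if i' = i then (t : ℤ) else 0 with hk
        have huk : u k = (t : ℚ) • x i := by
          simp only [hu, hk]
          rw [Finset.sum_eq_single i]
          · simp
          · intro i' _ hi'; simp [hi']
          · intro h; exact absurd (Finset.mem_univ i) h
        have : E k = ∑ j, ((t : ℚ)) ^ j.val • w j := by
          rw [hE]
          simp only [huk]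
          rw [← Fin.sum_univ_eq_sum_range
            (fun m => ((m.factorial : ℚ)⁻¹) • ((t : ℚ) • x i) ^ m) d]
          refine Finset.sum_congr rfl fun j _ => ?_
          rw [hw]
          simp only
          rw [smul_pow, smul_smul, smul_smul, mul_comm]
        rw [← this]; exact hEV k
      have := vand_mem w V hsample ⟨1, hd1⟩
      rw [hw] at this
      simpa using this
    · -- d = 1 : each x i is zero
      have hd1' : d = 1 := by omega
      have : x i = 0 := by
        have h := hnil (Pi.single i 1)
        rw [hd1', pow_one] at h
        rw [Finset.sum_eq_single i] at h
        · simpa using h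
        · intro i' _ hi'; simp [Pi.single_apply, hi']
        · intro h'; exact absurd (Finset.mem_univ i) h'
      rw [this]; exact V.zero_mem
  -- conclude
  have hBtop : (⊤ : Subalgebra ℚ A) ≤ B := by
    rw [← hgen]
    exact Algebra.adjoin_le (by rintro _ ⟨i, rfl⟩; exact hxV i)
  rw [eq_top_iff]
  intro a _
  exact hBtop (Algebra.mem_top)
end
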